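/- Any almost-everywhere gradient of f is measurable with respect to the (λ ⊗ μ)-completion of B(ℝ^d) ⊗ T. Here an a.e. gradient is any function φ : ℝ^d × Ξ → ℝ^d with φ = ∇f (λ ⊗ μ)-almost everywhere. -/

import Mathlib

open MeasureTheory Filter Set
open Topology

/-- Any a.e.-gradient `φ` of `f` (i.e. a map such that for `λ ⊗ μ`-a.e.
`(x,s)`, `f(·,s)` has gradient `φ(x,s)` at `x`) is measurable with respect to the
`λ ⊗ μ`-completion of the product σ-algebra (i.e. it is null-measurable). -/
theorem stmt3 {d : ℕ} {Ξ : Type*} [MeasurableSpace Ξ]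
    (μ : Measure Ξ) [IsProbabilityMeasure μ]
    (f : EuclideanSpace ℝ (Fin d) × Ξ → ℝ)
    (hf : Measurable f)
    (hlip : ∀ s : Ξ, LocallyLipschitz (fun x => f (x, s)))
    (φ : EuclideanSpace ℝ (Fin d) × Ξ → EuclideanSpace ℝ (Fin d))
    (hφ : ∀ᵐ p ∂((volume : Measure (EuclideanSpace ℝ (Fin d))).prod μ),
      HasGradientAt (fun x => f (x, p.2)) (φ p) p.1) :
    NullMeasurable φ ((volume : Measure (EuclideanSpace ℝ (Fin d))).prod μ) := by
  have b : OrthonormalBasis (Fin d) ℝ (EuclideanSpace ℝ (Fin d)) :=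
    EuclideanSpace.basisFun (Fin d) ℝ
  set g : ℕ → EuclideanSpace ℝ (Fin d) × Ξ → EuclideanSpace ℝ (Fin d) := fun n p =>
    ∑ i, (((n : ℝ)⁻¹)⁻¹ • (f (p.1 + (n : ℝ)⁻¹ • b i, p.2) - f (p.1, p.2))) • b i with hg_def
  have hg : ∀ n, Measurable (g n) := by
    intro n
    apply Finset.measurable_sum
    intro i _
    apply Measurable.smul_const
    have h1 : Measurable fun a : EuclideanSpace ℝ (Fin d) × Ξ =>
        f (a.1 + (n : ℝ)⁻¹ • b i, a.2) :=
      hf.comp ((measurable_fst.add_const ((n : ℝ)⁻¹ • b i)).prodMk measurable_snd)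
    have h2 : Measurable fun a : EuclideanSpace ℝ (Fin d) × Ξ => f (a.1, a.2) :=
      hf.comp (measurable_fst.prodMk measurable_snd)
    exact (h1.sub h2).const_smul (((n : ℝ)⁻¹)⁻¹)
  have htend : Tendsto (fun n : ℕ => (n : ℝ)⁻¹) atTop (𝓝[≠] (0 : ℝ)) := by
    apply tendsto_nhdsWithin_of_tendsto_nhds_of_eventually_within
    · exact tendsto_inv_atTop_zero.comp tendsto_natCast_atTop_atTop
    · filter_upwards [eventually_gt_atTop 0] with n hn
      simp [hn.ne']
  have hconv : ∀ᵐ p ∂((volume : Measure (EuclideanSpace ℝ (Fin d))).prod μ),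
      Tendsto (fun n => g n p) atTop (𝓝 (φ p)) := by
    filter_upwards [hφ] with p hp
    have key : ∀ i : Fin d,
        Tendsto (fun n : ℕ => ((n : ℝ)⁻¹)⁻¹ • (f (p.1 + (n : ℝ)⁻¹ • b i, p.2) - f (p.1, p.2)))
          atTop (𝓝 (inner ℝ (φ p) (b i) : ℝ)) := by
      intro i
      have h1 : HasLineDerivAt ℝ (fun x => f (x, p.2))
          ((InnerProductSpace.toDual ℝ (EuclideanSpace ℝ (Fin d)) (φ p)) (b i)) p.1 (b i) :=
        hp.hasFDerivAt.hasLineDerivAt (b i)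
      have h2 := h1.tendsto_slope_zero
      rw [InnerProductSpace.toDual_apply_apply] at h2
      exact h2.comp htend
    have hsum : (∑ i, (inner ℝ (φ p) (b i) : ℝ) • b i) = φ p := by
      rw [show (fun i => (inner ℝ (φ p) (b i) : ℝ) • b i)
          = fun i => (inner ℝ (b i) (φ p) : ℝ) • b i from
        funext fun i => by rw [real_inner_comm]]
      exact b.sum_repr' (φ p)
    rw [← hsum]
    exact tendsto_finset_sum _ fun i _ => (key i).smul_const (b i)
  exact (aemeasurable_of_tendsto_metrizable_ae atTop
    (fun n => (hg n).aemeasurable) hconv).nullMeasurable
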